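/- There exists a constant ζ ∈ (0,1) such that for every positive integer d: vol({x ∈ M_d(ℂ) : x* = −x and ‖x‖ ≤ 1}) ≥ ζ^{d²} · Θ_d, where Θ_d is the volume of the Euclidean ball of radius √d in d²-dimensional real Euclidean space. -/

import Mathlib

open MeasureTheory Real Metric

set_option synthInstance.maxHeartbeats 1000000
set_option maxHeartbeats 1000000
set_option linter.unusedSectionVars false
set_option linter.unusedTactic false

/-- The operator norm on `M_d(ℂ)` (acting on Euclidean space). -/
noncomputable def opN {d : ℕ} (x : Matrix (Fin d) (Fin d) ℂ) : ℝ :=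
  ‖Matrix.toEuclideanCLM (𝕜 := ℂ) x‖

namespace Stmt15


variable {V : Type*} [NormedAddCommGroup V] [InnerProductSpace ℝ V]
  [FiniteDimensional ℝ V] [MeasurableSpace V] [BorelSpace V]

lemma cast_arg (b t : ℝ) (x w : V) : -(b:ℂ) * (‖x‖:ℂ)^2 + (t:ℂ) * ((inner ℝ w x : ℝ) : ℂ)
      = ((-b * ‖x‖^2 + t * (inner ℝ w x : ℝ) : ℝ) : ℂ) := by push_cast; ring

lemma integrable_gauss (b : ℝ) (hb : 0 < b) (t : ℝ) (w : V) :
    Integrable (fun x : V => rexp (-b * ‖x‖^2 + t * (inner ℝ w x : ℝ))) := by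
  have h := (GaussianFourier.integrable_cexp_neg_mul_sq_norm_add
    (b := (b:ℂ)) (by simpa using hb) (t : ℂ) w).re
  convert h using 2 with x
  rw [cast_arg, ← Complex.ofReal_exp]
  exact (Complex.ofReal_re _).symm

lemma integral_gauss (b : ℝ) (hb : 0 < b) (t : ℝ) (w : V) :
    ∫ x : V, rexp (-b * ‖x‖^2 + t * (inner ℝ w x : ℝ))
      = (π / b) ^ ((Module.finrank ℝ V : ℝ) / 2) * rexp (t^2 * ‖w‖^2 / (4*b)) := by
  rw [← Complex.ofReal_inj]
  have h := GaussianFourier.integral_cexp_neg_mul_sq_norm_add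
    (b := (b:ℂ)) (by simpa using hb) (t : ℂ) w
  calc ((∫ x : V, rexp (-b * ‖x‖^2 + t * (inner ℝ w x : ℝ)) : ℝ) : ℂ)
      = ∫ x : V, ((rexp (-b * ‖x‖^2 + t * (inner ℝ w x : ℝ)) : ℝ) : ℂ) := by
        exact (integral_ofReal (𝕜 := ℂ)).symm
    _ = ∫ x : V, Complex.exp (-(b:ℂ) * (‖x‖:ℂ)^2 + (t:ℂ) * ((inner ℝ w x : ℝ) : ℂ)) := by
        congr 1 with x
        rw [cast_arg, ← Complex.ofReal_exp]
    _ = ((π:ℂ) / b) ^ ((Module.finrank ℝ V : ℂ) / 2) * Complex.exp ((t:ℂ)^2 * (‖w‖:ℂ)^2 / (4*(b:ℂ))) := h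
    _ = (((π / b) ^ ((Module.finrank ℝ V : ℝ) / 2) * rexp (t^2 * ‖w‖^2 / (4*b)) : ℝ) : ℂ) := by
        rw [Complex.ofReal_mul, Complex.ofReal_cpow (by positivity), Complex.ofReal_exp]
        congr 1
        · push_cast; ring
        · push_cast; ring








noncomputable def gm (b : ℝ) : Measure V :=
  volume.withDensity (fun x => ENNReal.ofReal (rexp (-b * ‖x‖^2)))

lemma integrable_gauss0 (b : ℝ) (hb : 0 < b) :
    Integrable (fun x : V => rexp (-b * ‖x‖^2)) := by
  simpa using integrable_gauss b hb 0 (0 : V)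

lemma gm_univ (b : ℝ) (hb : 0 < b) :
    gm (V := V) b Set.univ = ENNReal.ofReal ((π/b) ^ ((Module.finrank ℝ V : ℝ)/2)) := by
  rw [gm, withDensity_apply _ MeasurableSet.univ, setLIntegral_univ,
    ← ofReal_integral_eq_lintegral_ofReal (integrable_gauss0 b hb)
      (ae_of_all _ fun x => (Real.exp_nonneg _)),
    GaussianFourier.integral_rexp_neg_mul_sq_norm hb]

lemma gm_le_volume (b : ℝ) (hb : 0 ≤ b) {s : Set V} (hs : MeasurableSet s) :
    gm b s ≤ volume s := by
  rw [gm, withDensity_apply _ hs]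
  calc ∫⁻ x in s, ENNReal.ofReal (rexp (-b * ‖x‖^2))
      ≤ ∫⁻ _x in s, 1 := by
        refine setLIntegral_mono measurable_const fun x _ => ?_
        rw [show (1 : ENNReal) = ENNReal.ofReal 1 by simp]
        exact ENNReal.ofReal_le_ofReal (Real.exp_le_one_iff.mpr (by nlinarith [sq_nonneg ‖x‖]))
    _ = volume s := setLIntegral_one s

lemma gm_tail (b : ℝ) (hb : 0 < b) (w : V) (hw : ‖w‖ ≤ 1) :
    gm (V := V) b {x | 1/2 < (inner ℝ w x : ℝ)} ≤
      ENNReal.ofReal ((π/b) ^ ((Module.finrank ℝ V : ℝ)/2) * rexp (-(b/4))) := by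
  have hSopen : IsOpen {x : V | 1/2 < (inner ℝ w x : ℝ)} :=
    isOpen_lt continuous_const (innerSL ℝ w).continuous
  rw [gm, withDensity_apply _ hSopen.measurableSet]
  have hc : Continuous fun x : V => (inner ℝ w x : ℝ) := (innerSL ℝ w).continuous
  have hmeas : Measurable fun x : V =>
      ENNReal.ofReal (rexp (-(b/2)) * rexp (-b * ‖x‖^2 + b * (inner ℝ w x : ℝ))) := by
    refine ENNReal.measurable_ofReal.comp (Continuous.measurable ?_)
    exact (continuous_const.mul (Real.continuous_exp.comp
      ((continuous_const.mul (continuous_norm.pow 2)).add (continuous_const.mul hc))))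
  calc ∫⁻ x in {x : V | 1/2 < (inner ℝ w x : ℝ)}, ENNReal.ofReal (rexp (-b * ‖x‖^2))
      ≤ ∫⁻ x in {x : V | 1/2 < (inner ℝ w x : ℝ)},
          ENNReal.ofReal (rexp (-(b/2)) * rexp (-b * ‖x‖^2 + b * (inner ℝ w x : ℝ))) := by
        refine setLIntegral_mono hmeas fun x hx => ?_
        refine ENNReal.ofReal_le_ofReal ?_
        rw [← Real.exp_add]
        refine Real.exp_le_exp.mpr ?_
        have hx' : (1:ℝ)/2 < (inner ℝ w x : ℝ) := hx
        nlinarith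
    _ ≤ ∫⁻ x, ENNReal.ofReal (rexp (-(b/2)) * rexp (-b * ‖x‖^2 + b * (inner ℝ w x : ℝ))) :=
        setLIntegral_le_lintegral _ _
    _ = ENNReal.ofReal (∫ x : V, rexp (-(b/2)) * rexp (-b * ‖x‖^2 + b * (inner ℝ w x : ℝ))) :=
        (ofReal_integral_eq_lintegral_ofReal ((integrable_gauss b hb b w).const_mul _)
          (ae_of_all _ fun x => by positivity)).symm
    _ ≤ ENNReal.ofReal ((π/b) ^ ((Module.finrank ℝ V : ℝ)/2) * rexp (-(b/4))) := by
        rw [integral_const_mul, integral_gauss b hb b w]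
        refine ENNReal.ofReal_le_ofReal ?_
        rw [show rexp (-(b/2)) * ((π/b) ^ ((Module.finrank ℝ V : ℝ)/2) * rexp (b^2*‖w‖^2/(4*b)))
            = (π/b) ^ ((Module.finrank ℝ V : ℝ)/2) * (rexp (b^2*‖w‖^2/(4*b)) * rexp (-(b/2))) by ring,
          ← Real.exp_add]
        have hP : (0:ℝ) ≤ (π/b) ^ ((Module.finrank ℝ V : ℝ)/2) := by positivity
        refine mul_le_mul_of_nonneg_left (Real.exp_le_exp.mpr ?_) hP
        have hw2 : ‖w‖^2 ≤ 1 := by nlinarith [norm_nonneg w]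
        have : b^2*‖w‖^2/(4*b) = b*‖w‖^2/4 := by field_simp
        rw [this]; nlinarith

lemma ball_upper (b R : ℝ) (hb : 0 < b) (hR : 0 ≤ R) :
    volume (ball (0:V) R) ≤
      ENNReal.ofReal (rexp (b*R^2) * (π/b) ^ ((Module.finrank ℝ V : ℝ)/2)) := by
  have hmeas : Measurable fun x : V => ENNReal.ofReal (rexp (b*R^2) * rexp (-b * ‖x‖^2)) := by
    refine ENNReal.measurable_ofReal.comp (Continuous.measurable ?_)
    exact continuous_const.mul
      (Real.continuous_exp.comp (continuous_const.mul (continuous_norm.pow 2)))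
  calc volume (ball (0:V) R) = ∫⁻ _x in ball (0:V) R, 1 := (setLIntegral_one _).symm
    _ ≤ ∫⁻ x in ball (0:V) R, ENNReal.ofReal (rexp (b*R^2) * rexp (-b * ‖x‖^2)) := by
        refine setLIntegral_mono hmeas fun x hx => ?_
        rw [show (1 : ENNReal) = ENNReal.ofReal 1 by simp]
        refine ENNReal.ofReal_le_ofReal ?_
        rw [← Real.exp_add]
        refine Real.one_le_exp ?_
        have h1 : ‖x‖ < R := by simpa [dist_eq_norm] using (mem_ball.mp hx)
        have h2 : ‖x‖^2 ≤ R^2 := by nlinarith [norm_nonneg x]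
        nlinarith
    _ ≤ ∫⁻ x, ENNReal.ofReal (rexp (b*R^2) * rexp (-b * ‖x‖^2)) := setLIntegral_le_lintegral _ _
    _ = ENNReal.ofReal (∫ x : V, rexp (b*R^2) * rexp (-b * ‖x‖^2)) :=
        (ofReal_integral_eq_lintegral_ofReal ((integrable_gauss0 b hb).const_mul _)
          (ae_of_all _ fun x => by positivity)).symm
    _ = ENNReal.ofReal (rexp (b*R^2) * (π/b) ^ ((Module.finrank ℝ V : ℝ)/2)) := by
        rw [integral_const_mul, GaussianFourier.integral_rexp_neg_mul_sq_norm hb]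


end Stmt15

namespace Stmt15


lemma exists_net (ι : Type*) [Fintype ι] [Nonempty ι] :
    ∃ N : Finset (EuclideanSpace ℝ ι), N.card ≤ 9 ^ (Fintype.card ι) ∧
      (∀ y ∈ N, ‖y‖ = 1) ∧
      ∀ u : EuclideanSpace ℝ ι, ‖u‖ = 1 → ∃ y ∈ N, ‖u - y‖ ≤ 1/4 := by
  classical
  set E := EuclideanSpace ℝ ι with hE
  set m := Fintype.card ι with hm
  set S : Set (Set E) := {P | (∀ y ∈ P, ‖y‖ = 1) ∧ P.Pairwise fun a b => 1/4 ≤ dist a b} with hS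
  obtain ⟨P, hPmax⟩ := zorn_subset S (fun c hcS hchain => by
    refine ⟨⋃₀ c, ⟨?_, ?_⟩, fun s hs => Set.subset_sUnion_of_mem hs⟩
    · rintro y ⟨s, hs, hy⟩
      exact (hcS hs).1 y hy
    · intro a ha b hb hab
      obtain ⟨s, hs, ha'⟩ := ha
      obtain ⟨s', hs', hb'⟩ := hb
      by_cases hss : s = s'
      · exact (hcS hs').2 (hss ▸ ha') hb' hab
      · rcases hchain hs hs' hss with h | h
        · exact (hcS hs').2 (h ha') hb' hab
        · exact (hcS hs).2 ha' (h hb') hab)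
  have hPS : P ∈ S := hPmax.prop
  have hrk : Module.finrank ℝ E = m := finrank_euclideanSpace
  have hv0 : volume (ball (0:E) 1) ≠ 0 := (measure_ball_pos volume 0 one_pos).ne'
  have hvt : volume (ball (0:E) 1) ≠ ⊤ := measure_ball_lt_top.ne
  have hcard : ∀ F : Finset E, ↑F ⊆ P → F.card ≤ 9 ^ m := by
    intro F hF
    have hd : (↑F : Set E).PairwiseDisjoint (fun y => ball y (1/8 : ℝ)) := by
      intro a ha b hb hab
      have h14 : 1/4 ≤ dist a b := hPS.2 (hF ha) (hF hb) hab
      exact Metric.ball_disjoint_ball (by linarith)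
    have h1 : ∑ y ∈ F, volume (ball y (1/8:ℝ)) = volume (⋃ y ∈ F, ball y (1/8:ℝ)) :=
      (measure_biUnion_finset hd fun y _ => measurableSet_ball).symm
    have h2 : volume (⋃ y ∈ F, ball y (1/8:ℝ)) ≤ volume (ball (0:E) (9/8)) := by
      refine measure_mono (Set.iUnion₂_subset fun y hy => ball_subset_ball' ?_)
      have : dist y 0 = 1 := by rw [dist_zero_right]; exact hPS.1 y (hF hy)
      rw [this]; norm_num
    have hball : ∀ y : E, volume (ball y (1/8:ℝ))
        = ENNReal.ofReal ((1/8:ℝ)^m) * volume (ball (0:E) 1) := by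
      intro y
      rw [Measure.addHaar_ball volume y (by norm_num : (0:ℝ) ≤ 1/8), hrk]
    have h3 : volume (ball (0:E) (9/8)) = ENNReal.ofReal ((9/8:ℝ)^m) * volume (ball (0:E) 1) := by
      rw [Measure.addHaar_ball volume _ (by norm_num : (0:ℝ) ≤ 9/8), hrk]
    have key : (F.card : ENNReal) * (ENNReal.ofReal ((1/8:ℝ)^m) * volume (ball (0:E) 1))
        ≤ ENNReal.ofReal ((9/8:ℝ)^m) * volume (ball (0:E) 1) := by
      calc (F.card : ENNReal) * (ENNReal.ofReal ((1/8:ℝ)^m) * volume (ball (0:E) 1))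
          = ∑ y ∈ F, volume (ball y (1/8:ℝ)) := by
            rw [Finset.sum_congr rfl fun y _ => hball y, Finset.sum_const, nsmul_eq_mul]
        _ ≤ volume (ball (0:E) (9/8)) := h1 ▸ h2
        _ = _ := h3
    rw [← mul_assoc] at key
    have key2 : (F.card : ENNReal) * ENNReal.ofReal ((1/8:ℝ)^m) ≤ ENNReal.ofReal ((9/8:ℝ)^m) :=
      (ENNReal.mul_le_mul_iff_left hv0 hvt).mp key
    have key3 : (F.card : ℝ) * (1/8:ℝ)^m ≤ (9/8:ℝ)^m := by
      rw [show (F.card : ENNReal) = ENNReal.ofReal (F.card : ℝ) by simp,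
        ← ENNReal.ofReal_mul (by positivity)] at key2
      exact (ENNReal.ofReal_le_ofReal_iff (by positivity)).mp key2
    have key4 : (F.card : ℝ) ≤ (9:ℝ)^m := by
      calc (F.card : ℝ) = F.card * (1/8:ℝ)^m * 8^m := by
            rw [mul_assoc, ← mul_pow]; norm_num
        _ ≤ (9/8:ℝ)^m * 8^m := mul_le_mul_of_nonneg_right key3 (by positivity)
        _ = 9^m := by rw [← mul_pow]; norm_num
    exact_mod_cast key4
  have hPfin : P.Finite := by
    by_contra hinf
    obtain ⟨t, htP, htfin, htcard⟩ := Set.Infinite.exists_subset_ncard_eq hinf (9^m+1)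
    have hle := hcard htfin.toFinset (by simpa using htP)
    rw [show htfin.toFinset.card = t.ncard from (Set.ncard_eq_toFinset_card _ htfin).symm,
      htcard] at hle
    omega
  refine ⟨hPfin.toFinset, ?_, ?_, ?_⟩
  · exact hcard _ (by simp)
  · intro y hy; exact hPS.1 y (by simpa using hy)
  · intro u hu
    by_cases hmem : u ∈ P
    · exact ⟨u, by simpa using hmem, by simp⟩
    · by_contra hnone
      push_neg at hnone
      have hfar : ∀ b ∈ P, 1/4 ≤ dist u b := by
        intro b hb
        have := hnone b (by simpa using hb)
        rw [dist_eq_norm]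
        linarith
      have hins : insert u P ∈ S := by
        constructor
        · rintro y hy
          rcases Set.mem_insert_iff.mp hy with rfl | hy
          · exact hu
          · exact hPS.1 y hy
        · refine (Set.pairwise_insert).mpr
            ⟨hPS.2, fun b hb _ => ⟨hfar b hb, by rw [dist_comm]; exact hfar b hb⟩⟩
      have : u ∈ P := hPmax.2 hins (Set.subset_insert u P) (Set.mem_insert u P)
      exact hmem this



lemma trace_mul_star_re {d : ℕ} (M : Matrix (Fin d) (Fin d) ℂ) :
    ((M * star M).trace).re = ∑ i, ∑ j, ‖M i j‖^2 := by
  have : (M * star M).trace = ((∑ i, ∑ j, ‖M i j‖^2 : ℝ) : ℂ) := by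
    rw [Matrix.trace]
    push_cast
    refine Finset.sum_congr rfl fun i _ => ?_
    rw [Matrix.diag_apply, Matrix.mul_apply]
    refine Finset.sum_congr rfl fun j _ => ?_
    have h1 : M i j * star (M i j) = ((Complex.normSq (M i j) : ℝ) : ℂ) := Complex.mul_conj _
    rw [Matrix.star_apply, h1]
    norm_cast
    rw [Complex.normSq_eq_norm_sq]
  rw [this, Complex.ofReal_re]

set_option maxHeartbeats 1000000 in
lemma clm_norm_le_frob {d : ℕ} (M : Matrix (Fin d) (Fin d) ℂ) :
    ‖Matrix.toEuclideanCLM (𝕜 := ℂ) M‖ ≤ Real.sqrt (∑ i, ∑ j, ‖M i j‖^2) := by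
  have happ : ∀ (x : EuclideanSpace ℂ (Fin d)) (i : Fin d),
      (Matrix.toEuclideanCLM (𝕜 := ℂ) M x) i = ∑ j, M i j * x j := by
    intro x i
    have h := Matrix.ofLp_toEuclideanCLM (n := Fin d) (𝕜 := ℂ) M x
    have h2 : (Matrix.toEuclideanCLM (𝕜 := ℂ) M x) i
        = (WithLp.equiv 2 (Fin d → ℂ) (Matrix.toEuclideanCLM (𝕜 := ℂ) M x)) i := rfl
    rw [h]
    simp [Matrix.mulVec, dotProduct]
  refine ContinuousLinearMap.opNorm_le_bound _ (Real.sqrt_nonneg _) fun x => ?_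
  have hi : ∀ i : Fin d, ‖(Matrix.toEuclideanCLM (𝕜 := ℂ) M x) i‖^2
      ≤ (∑ j, ‖M i j‖^2) * ‖x‖^2 := by
    intro i
    set v : EuclideanSpace ℂ (Fin d) :=
      (WithLp.equiv 2 (Fin d → ℂ)).symm (fun j => starRingEnd ℂ (M i j)) with hv
    have hinner : (inner ℂ v x : ℂ) = (Matrix.toEuclideanCLM (𝕜 := ℂ) M x) i := by
      rw [happ]
      simp [PiLp.inner_apply, hv, WithLp.equiv_symm_apply, PiLp.toLp_apply, RCLike.inner_apply]
      exact Finset.sum_congr rfl fun j _ => mul_comm _ _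
    have hb := norm_inner_le_norm (𝕜 := ℂ) v x
    rw [hinner] at hb
    have hvnorm : ‖v‖ = Real.sqrt (∑ j, ‖M i j‖^2) := by
      rw [EuclideanSpace.norm_eq]
      congr 1
      exact Finset.sum_congr rfl fun j _ => by simp [hv, WithLp.equiv_symm_apply, PiLp.toLp_apply]
    rw [hvnorm] at hb
    have hsq := pow_le_pow_left₀ (norm_nonneg _) hb 2
    rwa [mul_pow, Real.sq_sqrt (by positivity)] at hsq
  calc ‖Matrix.toEuclideanCLM (𝕜 := ℂ) M x‖
      = Real.sqrt (∑ i, ‖(Matrix.toEuclideanCLM (𝕜 := ℂ) M x) i‖^2) :=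
        EuclideanSpace.norm_eq _
    _ ≤ Real.sqrt (∑ i, (∑ j, ‖M i j‖^2) * ‖x‖^2) :=
        Real.sqrt_le_sqrt (Finset.sum_le_sum fun i _ => hi i)
    _ = Real.sqrt (∑ i, ∑ j, ‖M i j‖^2) * ‖x‖ := by
        rw [← Finset.sum_mul, Real.sqrt_mul (by positivity), Real.sqrt_sq (norm_nonneg x)]

lemma opnorm_le_of_net {d : ℕ} (T : EuclideanSpace ℂ (Fin d) →L[ℂ] EuclideanSpace ℂ (Fin d))
    (N : Finset (EuclideanSpace ℂ (Fin d))) (hsph : ∀ y ∈ N, ‖y‖ = 1)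
    (hcov : ∀ u : EuclideanSpace ℂ (Fin d), ‖u‖ = 1 → ∃ y ∈ N, ‖u - y‖ ≤ 1/4)
    {t : ℝ} (ht : 0 ≤ t) (hN : ∀ y ∈ N, ∀ z ∈ N, ((inner ℂ z (T y) : ℂ)).re ≤ t) :
    ‖T‖ ≤ 2 * t := by
  have hTn := norm_nonneg T
  have key : ∀ u v : EuclideanSpace ℂ (Fin d), ‖u‖ = 1 → ‖v‖ = 1 →
      ((inner ℂ v (T u) : ℂ)).re ≤ t + (1/2) * ‖T‖ := by
    intro u v hu hv
    obtain ⟨y, hyN, hy⟩ := hcov u hu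
    obtain ⟨z, hzN, hz⟩ := hcov v hv
    have hdec : (inner ℂ v (T u) : ℂ)
        = inner ℂ z (T y) + (inner ℂ (v - z) (T u) + inner ℂ z (T (u - y))) := by
      rw [map_sub, inner_sub_left, inner_sub_right]
      ring
    rw [hdec, Complex.add_re, Complex.add_re]
    have h1 : ((inner ℂ (v - z) (T u) : ℂ)).re ≤ (1/4) * ‖T‖ := by
      have hb := norm_inner_le_norm (𝕜 := ℂ) (v - z) (T u)
      have hTu : ‖T u‖ ≤ ‖T‖ := by
        have := T.le_opNorm u; rw [hu, mul_one] at this; exact this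
      have hre : ((inner ℂ (v - z) (T u) : ℂ)).re ≤ ‖(inner ℂ (v - z) (T u) : ℂ)‖ :=
        Complex.re_le_norm _
      nlinarith [norm_nonneg (T u), norm_nonneg (v - z)]
    have h2 : ((inner ℂ z (T (u - y)) : ℂ)).re ≤ (1/4) * ‖T‖ := by
      have hb := norm_inner_le_norm (𝕜 := ℂ) z (T (u - y))
      have hTuy : ‖T (u - y)‖ ≤ ‖T‖ * (1/4) := by
        have h3 := T.le_opNorm (u - y)
        nlinarith [norm_nonneg (T (u-y))]
      have hre : ((inner ℂ z (T (u - y)) : ℂ)).re ≤ ‖(inner ℂ z (T (u - y)) : ℂ)‖ :=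
        Complex.re_le_norm _
      have hz1 : ‖z‖ = 1 := hsph z hzN
      nlinarith [norm_nonneg (T (u - y))]
    have h0 : ((inner ℂ z (T y) : ℂ)).re ≤ t := hN y hyN z hzN
    linarith
  have key2 : ∀ u : EuclideanSpace ℂ (Fin d), ‖u‖ = 1 → ‖T u‖ ≤ t + (1/2) * ‖T‖ := by
    intro u hu
    rcases eq_or_ne (T u) 0 with h0 | h0
    · rw [h0, norm_zero]; linarith
    · have hn0 : ‖T u‖ ≠ 0 := norm_ne_zero_iff.mpr h0
      set v : EuclideanSpace ℂ (Fin d) := (‖T u‖⁻¹ : ℝ) • T u with hvdef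
      have hvn : ‖v‖ = 1 := by
        rw [hvdef, norm_smul, Real.norm_eq_abs, abs_inv, abs_norm, inv_mul_cancel₀ hn0]
      have hiv : ((inner ℂ v (T u) : ℂ)).re = ‖T u‖ := by
        have hsm : ((‖T u‖⁻¹ : ℝ)) • T u = ((‖T u‖⁻¹ : ℝ) : ℂ) • T u := by
          rw [← Complex.coe_algebraMap, algebraMap_smul]
        have hval : (inner ℂ v (T u) : ℂ) = ((‖T u‖ : ℝ) : ℂ) := by
          rw [hvdef, hsm, inner_smul_left, inner_self_eq_norm_sq_to_K (𝕜 := ℂ),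
            Complex.conj_ofReal]
          have ha : ((‖T u‖ : ℝ) : ℂ) ≠ 0 := by exact_mod_cast hn0
          norm_cast
          field_simp
          push_cast
          simp [pow_two, ← mul_assoc, hn0, h0]
        rw [hval, Complex.ofReal_re]
      have := key u v hu hvn
      rw [hiv] at this
      exact this
  have key3 : ‖T‖ ≤ t + (1/2) * ‖T‖ := by
    refine ContinuousLinearMap.opNorm_le_bound _ (by linarith) fun x => ?_
    rcases eq_or_ne x 0 with rfl | hx0
    · rw [map_zero, norm_zero, mul_zero]
    · have hxn : ‖x‖ ≠ 0 := norm_ne_zero_iff.mpr hx0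
      have hu : ‖(‖x‖⁻¹ : ℝ) • x‖ = 1 := by
        rw [norm_smul, Real.norm_eq_abs, abs_inv, abs_norm, inv_mul_cancel₀ hxn]
      have h := key2 _ hu
      rw [ContinuousLinearMap.map_smul_of_tower, norm_smul, Real.norm_eq_abs, abs_inv,
        abs_norm] at h
      calc ‖T x‖ = (‖x‖⁻¹ * ‖T x‖) * ‖x‖ := by
            rw [mul_comm (‖x‖⁻¹) _, mul_assoc, inv_mul_cancel₀ hxn, mul_one]
        _ ≤ (t + 1/2 * ‖T‖) * ‖x‖ := mul_le_mul_of_nonneg_right h (norm_nonneg x)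
  linarith







lemma real_smul_eq_coe {d : ℕ} (r : ℝ) (v : EuclideanSpace ℂ (Fin d)) :
    r • v = ((r : ℂ)) • v := by
  rw [← Complex.coe_algebraMap, algebraMap_smul]

lemma tCLM_real_smul {d : ℕ} (r : ℝ) (M : Matrix (Fin d) (Fin d) ℂ) :
    Matrix.toEuclideanCLM (𝕜 := ℂ) (r • M) = r • Matrix.toEuclideanCLM (𝕜 := ℂ) M := by
  have h : r • M = ((r : ℂ)) • M := by
    rw [← Complex.coe_algebraMap, algebraMap_smul]
  ext v
  rw [h, _root_.map_smul, ContinuousLinearMap.smul_apply, ContinuousLinearMap.smul_apply,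
    ← real_smul_eq_coe]

noncomputable def Fw {d n : ℕ} (e : EuclideanSpace ℝ (Fin n) →ₗ[ℝ] Matrix (Fin d) (Fin d) ℂ)
    (y z : EuclideanSpace ℂ (Fin d)) : EuclideanSpace ℝ (Fin n) →ₗ[ℝ] ℝ where
  toFun := fun x => ((inner ℂ z ((Matrix.toEuclideanCLM (𝕜 := ℂ) (e x)) y) : ℂ)).re
  map_add' := by
    intro a b
    show ((inner ℂ z ((Matrix.toEuclideanCLM (𝕜 := ℂ) (e (a + b))) y) : ℂ)).re
      = ((inner ℂ z ((Matrix.toEuclideanCLM (𝕜 := ℂ) (e a)) y) : ℂ)).re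
        + ((inner ℂ z ((Matrix.toEuclideanCLM (𝕜 := ℂ) (e b)) y) : ℂ)).re
    rw [map_add, _root_.map_add, ContinuousLinearMap.add_apply, inner_add_right,
      Complex.add_re]
  map_smul' := by
    intro r a
    show ((inner ℂ z ((Matrix.toEuclideanCLM (𝕜 := ℂ) (e (r • a))) y) : ℂ)).re
      = r * ((inner ℂ z ((Matrix.toEuclideanCLM (𝕜 := ℂ) (e a)) y) : ℂ)).re
    rw [LinearMap.map_smul, tCLM_real_smul, ContinuousLinearMap.smul_apply, real_smul_eq_coe,
      inner_smul_right]
    simp [Complex.mul_re]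

lemma exists_w {d n : ℕ} (e : EuclideanSpace ℝ (Fin n) →ₗ[ℝ] Matrix (Fin d) (Fin d) ℂ)
    (hin : ∀ v w, (inner ℝ v w : ℝ) = ((e v * star (e w)).trace).re)
    (y z : EuclideanSpace ℂ (Fin d)) (hy : ‖y‖ ≤ 1) (hz : ‖z‖ ≤ 1) :
    ∃ w : EuclideanSpace ℝ (Fin n), ‖w‖ ≤ 1 ∧ ∀ x,
      (inner ℝ w x : ℝ) = ((inner ℂ z ((Matrix.toEuclideanCLM (𝕜 := ℂ) (e x)) y) : ℂ)).re := by
  have hFb : ∀ x, |Fw e y z x| ≤ 1 * ‖x‖ := by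
    intro x
    have h1 : |((inner ℂ z ((Matrix.toEuclideanCLM (𝕜 := ℂ) (e x)) y) : ℂ)).re|
        ≤ ‖(inner ℂ z ((Matrix.toEuclideanCLM (𝕜 := ℂ) (e x)) y) : ℂ)‖ := by
      exact Complex.abs_re_le_norm _
    have h2 := norm_inner_le_norm (𝕜 := ℂ) z ((Matrix.toEuclideanCLM (𝕜 := ℂ) (e x)) y)
    have h3 := (Matrix.toEuclideanCLM (𝕜 := ℂ) (e x)).le_opNorm y
    have h4 : ‖Matrix.toEuclideanCLM (𝕜 := ℂ) (e x)‖ ≤ ‖x‖ := by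
      refine le_trans (clm_norm_le_frob (e x)) ?_
      rw [← trace_mul_star_re, ← hin x x, real_inner_self_eq_norm_sq]
      rw [Real.sqrt_sq (norm_nonneg x)]
    have h5 : (0:ℝ) ≤ ‖(Matrix.toEuclideanCLM (𝕜 := ℂ) (e x)) y‖ := norm_nonneg _
    have h6 := norm_nonneg (Matrix.toEuclideanCLM (𝕜 := ℂ) (e x))
    have h7 := norm_nonneg x
    have h8 := norm_nonneg z
    have h9 := norm_nonneg y
    show |Fw e y z x| ≤ 1 * ‖x‖
    have : |Fw e y z x| = |((inner ℂ z ((Matrix.toEuclideanCLM (𝕜 := ℂ) (e x)) y) : ℂ)).re| := rfl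
    rw [this]
    nlinarith
  set Fc := LinearMap.toContinuousLinearMap (Fw e y z) with hFc
  refine ⟨(InnerProductSpace.toDual ℝ _).symm Fc, ?_, ?_⟩
  · rw [LinearIsometryEquiv.norm_map]
    refine ContinuousLinearMap.opNorm_le_bound _ zero_le_one fun x => ?_
    rw [show ‖Fc x‖ = |Fw e y z x| from rfl]
    exact hFb x
  · intro x
    rw [InnerProductSpace.toDual_symm_apply]
    rfl









lemma cont_norm {d n : ℕ} (e : EuclideanSpace ℝ (Fin n) →ₗ[ℝ] Matrix (Fin d) (Fin d) ℂ) :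
    Continuous fun x => ‖Matrix.toEuclideanCLM (𝕜 := ℂ) (e x)‖ := by
  set G : EuclideanSpace ℝ (Fin n) →ₗ[ℝ]
      (EuclideanSpace ℂ (Fin d) →L[ℂ] EuclideanSpace ℂ (Fin d)) := {
    toFun := fun x => Matrix.toEuclideanCLM (𝕜 := ℂ) (e x)
    map_add' := fun a b => by
      show Matrix.toEuclideanCLM (𝕜 := ℂ) (e (a + b))
        = Matrix.toEuclideanCLM (𝕜 := ℂ) (e a) + Matrix.toEuclideanCLM (𝕜 := ℂ) (e b)
      rw [map_add, _root_.map_add]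
    map_smul' := fun r a => by
      show Matrix.toEuclideanCLM (𝕜 := ℂ) (e (r • a))
        = r • Matrix.toEuclideanCLM (𝕜 := ℂ) (e a)
      rw [LinearMap.map_smul, tCLM_real_smul] } with hG
  exact (G.continuous_of_finiteDimensional).norm

lemma exists_net_complex (d : ℕ) (hd : 0 < d) :
    ∃ N : Finset (EuclideanSpace ℂ (Fin d)), N.card ≤ 9 ^ (2*d) ∧ (∀ y ∈ N, ‖y‖ = 1) ∧
      ∀ u : EuclideanSpace ℂ (Fin d), ‖u‖ = 1 → ∃ y ∈ N, ‖u - y‖ ≤ 1/4 := by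
  classical
  have hfr : Module.finrank ℝ (EuclideanSpace ℂ (Fin d)) = 2 * d := by
    rw [finrank_real_of_complex, finrank_euclideanSpace_fin]
  haveI : Nonempty (Fin (Module.finrank ℝ (EuclideanSpace ℂ (Fin d)))) :=
    ⟨⟨0, by rw [hfr]; omega⟩⟩
  obtain ⟨N₀, hc, hs, hcov⟩ := exists_net (Fin (Module.finrank ℝ (EuclideanSpace ℂ (Fin d))))
  set J := (stdOrthonormalBasis ℝ (EuclideanSpace ℂ (Fin d))).repr.symm with hJ
  refine ⟨N₀.image (fun v => J v), ?_, ?_, ?_⟩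
  · exact le_trans (Finset.card_image_le) (hc.trans_eq (by rw [Fintype.card_fin, hfr]))
  · intro y hy
    obtain ⟨v, hv, rfl⟩ := Finset.mem_image.mp hy
    rw [LinearIsometryEquiv.norm_map]
    exact hs v hv
  · intro u hu
    obtain ⟨v, hv, hvc⟩ := hcov (J.symm u) (by rw [LinearIsometryEquiv.norm_map]; exact hu)
    refine ⟨J v, Finset.mem_image_of_mem _ hv, ?_⟩
    have h2 : u - J v = J (J.symm u - v) := by
      rw [map_sub, LinearIsometryEquiv.apply_symm_apply]
    rw [h2, LinearIsometryEquiv.norm_map]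
    exact hvc



lemma numeric1 (d c : ℕ) (hd : 1 ≤ d) (hc : c ≤ 9 ^ (2*d)) :
    ((c:ℝ) * c) * rexp (-(48 * d / 4)) ≤ 1/2 := by
  have he : (13122:ℝ) ≤ rexp 12 := by
    have h1 : (2.7:ℝ) ≤ rexp 1 := le_of_lt (lt_trans (by norm_num) Real.exp_one_gt_d9)
    have h2 : ((2.7:ℝ))^(12:ℕ) ≤ (rexp 1)^(12:ℕ) := pow_le_pow_left₀ (by norm_num) h1 12
    have h3 : (rexp 1)^(12:ℕ) = rexp 12 := by
      rw [← Real.exp_nat_mul]; norm_num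
    calc (13122:ℝ) ≤ (2.7:ℝ)^(12:ℕ) := by norm_num
      _ ≤ (rexp 1)^(12:ℕ) := h2
      _ = rexp 12 := h3
  have e1 : rexp (-12) ≤ 1/13122 := by
    rw [Real.exp_neg]
    calc (rexp 12)⁻¹ ≤ (13122:ℝ)⁻¹ := inv_anti₀ (by norm_num) he
      _ = 1/13122 := by norm_num
  have e2 : (0:ℝ) ≤ rexp (-12) := le_of_lt (Real.exp_pos _)
  have e3 : (6561:ℝ) * rexp (-12) ≤ 1/2 := by nlinarith
  have hre : rexp (-(48 * (d:ℝ) / 4)) = (rexp (-12))^d := by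
    rw [← Real.exp_nat_mul]; congr 1; push_cast; ring
  have hc' : (c:ℝ) ≤ (9:ℝ)^(2*d) := by exact_mod_cast hc
  have hcn : (0:ℝ) ≤ (c:ℝ) := Nat.cast_nonneg c
  calc ((c:ℝ) * c) * rexp (-(48 * d / 4)) = ((c:ℝ) * c) * (rexp (-12))^d := by rw [hre]
    _ ≤ ((9:ℝ)^(2*d) * (9:ℝ)^(2*d)) * (rexp (-12))^d := by
        have : (c:ℝ) * c ≤ (9:ℝ)^(2*d) * (9:ℝ)^(2*d) := by nlinarith
        exact mul_le_mul_of_nonneg_right this (by positivity)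
    _ = ((6561:ℝ) * rexp (-12))^d := by
        rw [mul_pow, ← pow_add, show 2*d+2*d = 4*d by ring, pow_mul]
        norm_num
    _ ≤ (1/2:ℝ)^d := pow_le_pow_left₀ (by positivity) e3 d
    _ ≤ 1/2 := pow_le_of_le_one (by norm_num) (by norm_num) (by omega)

lemma numeric2 (n : ℕ) (hn : 1 ≤ n) :
    (1/100:ℝ)^n * rexp n * 2 ≤ (1/48:ℝ) ^ ((n:ℝ)/2) := by
  have hs : (1/7:ℝ) ≤ (1/48:ℝ) ^ ((1:ℝ)/2) := by
    rw [show ((1:ℝ)/48) ^ ((1:ℝ)/2) = Real.sqrt (1/48) by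
      rw [Real.sqrt_eq_rpow]]
    rw [show (1/7:ℝ) = Real.sqrt ((1/49:ℝ)) by
      rw [show (1/49:ℝ) = (1/7)^2 by norm_num, Real.sqrt_sq (by norm_num)]]
    exact Real.sqrt_le_sqrt (by norm_num)
  have hexp : rexp (n:ℝ) = (rexp 1)^n := by
    rw [← Real.exp_nat_mul]; norm_num
  have he : rexp 1 ≤ 2.7182818286 := le_of_lt Real.exp_one_lt_d9
  have h14 : (1/100:ℝ) * rexp 1 ≤ (1/14:ℝ) := by nlinarith [Real.exp_pos 1]
  have hrw : (1/48:ℝ) ^ ((n:ℝ)/2) = ((1/48:ℝ) ^ ((1:ℝ)/2))^n := by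
    rw [← Real.rpow_natCast ((1/48:ℝ) ^ ((1:ℝ)/2)) n, ← Real.rpow_mul (by norm_num)]
    congr 1; push_cast; ring
  calc (1/100:ℝ)^n * rexp n * 2 = ((1/100)*rexp 1)^n * 2 := by rw [hexp, mul_pow]
    _ ≤ (1/14:ℝ)^n * 2 :=
        mul_le_mul_of_nonneg_right (pow_le_pow_left₀ (by positivity) h14 n) (by norm_num)
    _ = (1/2:ℝ)^n * (1/7)^n * 2 := by rw [← mul_pow]; norm_num
    _ ≤ (1/2) * (1/7)^n * 2 := by
        have h2 : (1/2:ℝ)^n ≤ 1/2 := pow_le_of_le_one (by norm_num) (by norm_num) (by omega)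
        have h7 : (0:ℝ) ≤ (1/7:ℝ)^n := by positivity
        nlinarith
    _ = (1/7:ℝ)^n := by ring
    _ ≤ ((1/48:ℝ) ^ ((1:ℝ)/2))^n := pow_le_pow_left₀ (by norm_num) hs n
    _ = (1/48:ℝ) ^ ((n:ℝ)/2) := hrw.symm


end Stmt15

open Stmt15


/-- lower volume estimate from the Addendum, via Raymond's
asymptotics: there is `ζ ∈ (0,1)` such that for every `d ≥ 1` the volume of
the operator-norm unit ball of the skew-Hermitian `d×d` matrices (computed in
the real inner ℂ product `⟨x,y⟩ = Re Tr(x y*)`, expressed here through any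
isometric parametrization `e` by `ℝ^{d²}`) is at least `ζ^{d²}·Θ_d`, where
`Θ_d` is the volume of the Euclidean ball of radius `√d` in `ℝ^{d²}`. -/
theorem stmt_15 :
    ∃ ζ : ℝ, 0 < ζ ∧ ζ < 1 ∧ ∀ d : ℕ, 0 < d →
      ∀ e : EuclideanSpace ℝ (Fin (d ^ 2)) →ₗ[ℝ] Matrix (Fin d) (Fin d) ℂ,
        (∀ v, star (e v) = -(e v)) →
        (∀ v w, (inner ℝ v w : ℝ) = ((e v * star (e w)).trace).re) →
        ENNReal.ofReal (ζ ^ (d ^ 2)) *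
            volume (Metric.ball (0 : EuclideanSpace ℝ (Fin (d ^ 2)))
              (Real.sqrt d)) ≤
          volume (e ⁻¹' {x : Matrix (Fin d) (Fin d) ℂ | opN x ≤ 1}) := by
  classical
  refine ⟨1/100, by norm_num, by norm_num, ?_⟩
  intro d hd e hskew hinn
  have hd1 : (1:ℝ) ≤ (d:ℝ) := by exact_mod_cast hd
  have hrk : Module.finrank ℝ (EuclideanSpace ℝ (Fin (d^2))) = d^2 := finrank_euclideanSpace_fin
  set b : ℝ := 48 * d with hbdef
  have hbpos : (0:ℝ) < b := by rw [hbdef]; positivity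
  set P : ℝ := (π/b) ^ (((d^2 : ℕ) : ℝ)/2) with hPdef
  have hPpos : 0 < P := by
    rw [hPdef]; positivity
  set K : Set (EuclideanSpace ℝ (Fin (d^2))) := e ⁻¹' {x | opN x ≤ 1} with hK
  have hKm : MeasurableSet K := by
    have hcont : Continuous fun x : EuclideanSpace ℝ (Fin (d^2)) => opN (e x) := cont_norm e
    exact (isClosed_le hcont continuous_const).measurableSet
  obtain ⟨N, hNc, hNs, hNcov⟩ := exists_net_complex d hd
  -- choice of dual vectors
  have hWex : ∀ y z : EuclideanSpace ℂ (Fin d), ∃ w : EuclideanSpace ℝ (Fin (d^2)),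
      (‖y‖ ≤ 1 → ‖z‖ ≤ 1 → (‖w‖ ≤ 1 ∧ ∀ x, (inner ℝ w x : ℝ)
        = ((inner ℂ z ((Matrix.toEuclideanCLM (𝕜 := ℂ) (e x)) y) : ℂ)).re)) := by
    intro y z
    by_cases h1 : ‖y‖ ≤ 1
    · by_cases h2 : ‖z‖ ≤ 1
      · obtain ⟨w, hw1, hw2⟩ := exists_w e hinn y z h1 h2
        exact ⟨w, fun _ _ => ⟨hw1, hw2⟩⟩
      · exact ⟨0, fun _ h => absurd h h2⟩
    · exact ⟨0, fun h _ => absurd h h1⟩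
  choose W hW using hWex
  -- covering of the complement
  have hsub : Kᶜ ⊆ ⋃ p ∈ N ×ˢ N,
      {x : EuclideanSpace ℝ (Fin (d^2)) | 1/2 < (inner ℝ (W p.1 p.2) x : ℝ)} := by
    intro x hx
    have hx' : 1 < opN (e x) := by
      by_contra hle
      exact hx (by simpa [hK, Set.mem_preimage] using le_of_not_gt hle)
    by_contra hxn
    have hbound : ∀ y ∈ N, ∀ z ∈ N,
        ((inner ℂ z ((Matrix.toEuclideanCLM (𝕜 := ℂ) (e x)) y) : ℂ)).re ≤ 1/2 := by
      intro y hy z hz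
      have hyz := hW y z (le_of_eq (hNs y hy)) (le_of_eq (hNs z hz))
      rw [← hyz.2 x]
      by_contra hgt
      push_neg at hgt
      have hmem : (y, z) ∈ N ×ˢ N := Finset.mem_product.mpr ⟨hy, hz⟩
      exact hxn (Set.mem_biUnion hmem (show x ∈ {x : EuclideanSpace ℝ (Fin (d^2)) |
        1/2 < (inner ℝ (W (y, z).1 (y, z).2) x : ℝ)} from hgt))
    have hT := opnorm_le_of_net (Matrix.toEuclideanCLM (𝕜 := ℂ) (e x)) N hNs hNcov
      (by norm_num) hbound
    have : opN (e x) = ‖Matrix.toEuclideanCLM (𝕜 := ℂ) (e x)‖ := rfl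
    rw [this] at hx'
    linarith
  -- measure of the complement
  have hKc : gm b Kᶜ ≤ ENNReal.ofReal (((N.card : ℝ) * N.card) * (P * rexp (-(b/4)))) := by
    calc gm b Kᶜ ≤ gm b (⋃ p ∈ N ×ˢ N,
        {x : EuclideanSpace ℝ (Fin (d^2)) | 1/2 < (inner ℝ (W p.1 p.2) x : ℝ)}) :=
          measure_mono hsub
      _ ≤ ∑ p ∈ N ×ˢ N, gm b {x : EuclideanSpace ℝ (Fin (d^2)) |
            1/2 < (inner ℝ (W p.1 p.2) x : ℝ)} := measure_biUnion_finset_le _ _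
      _ ≤ ∑ _p ∈ N ×ˢ N, ENNReal.ofReal (P * rexp (-(b/4))) := by
          refine Finset.sum_le_sum fun p hp => ?_
          obtain ⟨h1, h2⟩ := Finset.mem_product.mp hp
          have hw1 := (hW p.1 p.2 (le_of_eq (hNs _ h1)) (le_of_eq (hNs _ h2))).1
          have := gm_tail (V := EuclideanSpace ℝ (Fin (d^2))) b hbpos (W p.1 p.2) hw1
          rwa [hrk] at this
      _ = ((N ×ˢ N).card : ENNReal) * ENNReal.ofReal (P * rexp (-(b/4))) := by
          rw [Finset.sum_const, nsmul_eq_mul]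
      _ = ENNReal.ofReal (((N.card : ℝ) * N.card) * (P * rexp (-(b/4)))) := by
          rw [Finset.card_product, ← ENNReal.ofReal_natCast, ← ENNReal.ofReal_mul
            (by positivity)]
          congr 2
          push_cast
          ring
  have hKc2 : gm b Kᶜ ≤ ENNReal.ofReal (P/2) := by
    refine le_trans hKc (ENNReal.ofReal_le_ofReal ?_)
    have hnum := numeric1 d N.card hd hNc
    have hb4 : -(b/4) = -(48 * (d:ℝ) / 4) := by rw [hbdef]
    rw [hb4]
    nlinarith [Real.exp_pos (-(48 * (d:ℝ) / 4)), hPpos,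
      mul_le_mul_of_nonneg_left hnum (le_of_lt hPpos)]
  have huniv : gm (V := EuclideanSpace ℝ (Fin (d^2))) b Set.univ = ENNReal.ofReal P := by
    rw [gm_univ b hbpos, hrk]
  have hsplit : gm (V := EuclideanSpace ℝ (Fin (d^2))) b Set.univ ≤ gm b K + gm b Kᶜ := by
    rw [show (Set.univ : Set (EuclideanSpace ℝ (Fin (d^2)))) = K ∪ Kᶜ by
      rw [Set.union_compl_self]]
    exact measure_union_le _ _
  have hKlow : ENNReal.ofReal (P/2) ≤ gm b K := by
    have h1 : ENNReal.ofReal P - ENNReal.ofReal (P/2) ≤ gm b K := by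
      rw [← huniv]
      refine tsub_le_iff_right.mpr ?_
      calc gm (V := EuclideanSpace ℝ (Fin (d^2))) b Set.univ ≤ gm b K + gm b Kᶜ := hsplit
        _ ≤ gm b K + ENNReal.ofReal (P/2) := add_le_add_right hKc2 _
    calc ENNReal.ofReal (P/2) = ENNReal.ofReal (P - P/2) := by congr 1; ring
      _ = ENNReal.ofReal P - ENNReal.ofReal (P/2) := ENNReal.ofReal_sub _ (by positivity)
      _ ≤ gm b K := h1
  have hvolK : ENNReal.ofReal (P/2) ≤ volume K :=
    hKlow.trans (gm_le_volume b (le_of_lt hbpos) hKm)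
  -- ball upper bound
  have hball := ball_upper (V := EuclideanSpace ℝ (Fin (d^2))) (d:ℝ) (Real.sqrt d)
    (by positivity) (Real.sqrt_nonneg _)
  rw [hrk] at hball
  -- final chain
  calc ENNReal.ofReal ((1/100:ℝ) ^ (d^2)) * volume (ball (0 : EuclideanSpace ℝ (Fin (d^2)))
        (Real.sqrt d))
      ≤ ENNReal.ofReal ((1/100:ℝ) ^ (d^2)) * ENNReal.ofReal (rexp ((d:ℝ) * Real.sqrt d ^ 2)
          * (π/(d:ℝ)) ^ (((d^2 : ℕ) : ℝ)/2)) := mul_le_mul_right hball _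
    _ = ENNReal.ofReal ((1/100:ℝ) ^ (d^2) * (rexp ((d:ℝ) * Real.sqrt d ^ 2)
          * (π/(d:ℝ)) ^ (((d^2 : ℕ) : ℝ)/2))) := (ENNReal.ofReal_mul (by positivity)).symm
    _ ≤ ENNReal.ofReal (P/2) := by
        refine ENNReal.ofReal_le_ofReal ?_
        have hsq : Real.sqrt d ^ 2 = (d:ℝ) := Real.sq_sqrt (by positivity)
        rw [hsq]
        have hdd : (d:ℝ) * (d:ℝ) = ((d^2 : ℕ) : ℝ) := by push_cast; ring
        rw [hdd]
        have hQpos : (0:ℝ) < (π/(d:ℝ)) ^ (((d^2 : ℕ) : ℝ)/2) := by positivity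
        have hPsplit : P = (π/(d:ℝ)) ^ (((d^2 : ℕ) : ℝ)/2) * (1/48:ℝ) ^ (((d^2 : ℕ) : ℝ)/2) := by
          rw [hPdef, show π/b = (π/(d:ℝ)) * (1/48) by
              rw [hbdef, div_mul_div_comm, mul_one, mul_comm (d:ℝ) 48],
            Real.mul_rpow (by positivity) (by norm_num)]
        have hnum := numeric2 (d^2) (by nlinarith [hd] )
        rw [hPsplit]
        set Q := (π/(d:ℝ)) ^ (((d^2 : ℕ) : ℝ)/2)
        set S := (1/48:ℝ) ^ (((d^2 : ℕ) : ℝ)/2)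
        have hS : (1/100:ℝ)^(d^2) * rexp ((d^2 : ℕ)) * 2 ≤ S := hnum
        nlinarith [Real.exp_pos (((d^2 : ℕ) : ℝ)), hQpos]
    _ ≤ volume K := hvolK
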